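/- Let S, S', T be finite multisets of rational numbers with S ≤ S' in the Newton polygon partial order. Then S ⊗ T ≤ S' ⊗ T, where S ⊗ T is the multiset of all pairwise sums {s + t : s ∈ S, t ∈ T} counted with multiplicity. -/

import Mathlib

/-- Newton polygon partial order on finite multisets of rationals. -/
def npLE (S T : Multiset ℚ) : Prop :=
  Multiset.card S = Multiset.card T ∧
    ∀ i : ℕ, ((S.sort (· ≤ ·)).take i).sum ≤ ((T.sort (· ≤ ·)).take i).sum

/-- The product `S ⊗ T`: the multiset of all pairwise sums, with multiplicity. -/
def otimes (S T : Multiset ℚ) : Multiset ℚ :=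
  S.bind fun s => T.map fun t => s + t

namespace NewtonAux

/-- pairwise dot product `Σ cᵢ * lᵢ`. -/
def dot : List ℕ → List ℚ → ℚ
  | c :: cs, x :: xs => (c : ℚ) * x + dot cs xs
  | _, _ => 0

@[simp] lemma dot_nil_left (l : List ℚ) : dot [] l = 0 := by cases l <;> rfl
@[simp] lemma dot_nil_right (c : List ℕ) : dot c [] = 0 := by cases c <;> rfl
@[simp] lemma dot_cons (c : ℕ) (cs : List ℕ) (x : ℚ) (xs : List ℚ) :
    dot (c :: cs) (x :: xs) = (c : ℚ) * x + dot cs xs := rfl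

lemma sum_take_cons_le (y : ℚ) (x : List ℚ) (hy : ∀ a ∈ x, y ≤ a) (k : ℕ) (hk : k ≤ x.length) :
    ((y :: x).take k).sum ≤ (x.take k).sum := by
  cases k with
  | zero => simp
  | succ k =>
    have hk' : k < x.length := hk
    rw [List.take_succ_cons, List.sum_cons, List.sum_take_succ x k hk']
    have h1 : y ≤ x[k] := hy _ (List.getElem_mem hk')
    linarith

lemma sum_take_le_of_sublist {u x : List ℚ} (hu : u.Sublist x) (hx : x.Pairwise (· ≤ ·)) :
    ((x.take u.length).sum ≤ u.sum) := by
  induction hu with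
  | slnil => simp
  | @cons l₁ l₂ y h ih =>
    have hy : ∀ a ∈ l₂, y ≤ a := (List.pairwise_cons.mp hx).1
    have hx' : l₂.Pairwise (· ≤ ·) := (List.pairwise_cons.mp hx).2
    calc ((y :: l₂).take l₁.length).sum ≤ (l₂.take l₁.length).sum :=
          sum_take_cons_le y l₂ hy _ h.length_le
      _ ≤ l₁.sum := ih hx'
  | @cons_cons l₁ l₂ y h ih =>
    have hx' : l₂.Pairwise (· ≤ ·) := (List.pairwise_cons.mp hx).2
    simp only [List.length_cons, List.take_succ_cons, List.sum_cons]
    exact add_le_add_right (ih hx') y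

/-- sum of the `card U` smallest elements of `X` is at most the sum of any
sub-multiset `U` of `X`. -/
lemma sorted_take_sum_le (X U : Multiset ℚ) (h : U ≤ X) :
    ((X.sort (· ≤ ·)).take (Multiset.card U)).sum ≤ U.sum := by
  have h' : (U.sort (· ≤ ·)).Subperm (X.sort (· ≤ ·)) := by
    rw [← Multiset.coe_le, Multiset.sort_eq, Multiset.sort_eq]; exact h
  obtain ⟨l, hperm, hsub⟩ := h'
  have hlen : l.length = Multiset.card U := by
    rw [hperm.length_eq]
    conv_rhs => rw [← Multiset.sort_eq U (· ≤ ·)]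
    simp
  have hsum : l.sum = U.sum := by
    rw [hperm.sum_eq]
    rw [← Multiset.sum_coe, Multiset.sort_eq]
  rw [← hlen, ← hsum]
  exact sum_take_le_of_sublist hsub (Multiset.pairwise_sort _ _)

lemma split_le_add (U A B : Multiset ℚ) (h : U ≤ A + B) :
    ∃ U₁ U₂, U₁ ≤ A ∧ U₂ ≤ B ∧ U = U₁ + U₂ := by
  refine ⟨U ∩ A, U - A, Multiset.inter_le_right, ?_, ?_⟩
  · rw [Multiset.sub_le_iff_le_add]; rwa [add_comm] at h
  · ext a
    simp only [Multiset.count_add, Multiset.count_inter, Multiset.count_sub]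
    omega

lemma sum_map_sub (U : Multiset ℚ) (s : ℚ) :
    (U.map (fun x => x - s)).sum = U.sum - (Multiset.card U : ℚ) * s := by
  induction U using Multiset.induction_on with
  | empty => simp
  | cons a t ih => simp [ih]; ring

lemma map_sub_le (M U₁ : Multiset ℚ) (s : ℚ) (h : U₁ ≤ M.map (s + ·)) :
    U₁.map (fun x => x - s) ≤ M := by
  have := Multiset.map_le_map (f := fun x => x - s) h
  rwa [Multiset.map_map, show ((fun x => x - s) ∘ (s + ·)) = id by funext t; simp,
    Multiset.map_id] at this

lemma list_sum_map_add_left (s : ℚ) (l : List ℚ) :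
    (l.map (fun t => s + t)).sum = (l.length : ℚ) * s + l.sum := by
  induction l with
  | nil => simp
  | cons a t ih => simp [ih]; ring

lemma otimes_eq (S T : Multiset ℚ) :
    otimes S T = ((S.sort (· ≤ ·)).map fun s => T.map (fun t => s + t)).sum := by
  rw [otimes]
  conv_lhs => rw [← Multiset.sort_eq S (· ≤ ·)]
  induction (Multiset.sort S (· ≤ ·)) with
  | nil => simp
  | cons a l ih => rw [← Multiset.cons_coe, Multiset.cons_bind, ih, List.map_cons, List.sum_cons]

/-- decomposition of a sub-multiset of a product into rows -/
lemma decompose (M : Multiset ℚ) : ∀ (l : List ℚ) (U : Multiset ℚ),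
    U ≤ (l.map fun s => M.map (fun t => s + t)).sum →
    ∃ c : List ℕ, c.length = l.length ∧ (∀ x ∈ c, x ≤ Multiset.card M) ∧
      c.sum = Multiset.card U ∧
      dot c l + (c.map fun n => ((M.sort (· ≤ ·)).take n).sum).sum ≤ U.sum := by
  intro l
  induction l with
  | nil =>
    intro U hU
    simp only [List.map_nil, List.sum_nil, Multiset.le_zero] at hU
    refine ⟨[], rfl, by simp, ?_, ?_⟩ <;> simp [hU]
  | cons s l ih =>
    intro U hU
    rw [List.map_cons, List.sum_cons] at hU
    obtain ⟨U₁, U₂, h₁, h₂, rfl⟩ := split_le_add U _ _ hU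
    obtain ⟨c, hlen, hbd, hsum, hle⟩ := ih U₂ h₂
    refine ⟨Multiset.card U₁ :: c, by simp [hlen], ?_, by simp [hsum], ?_⟩
    · intro x hx
      rcases List.mem_cons.mp hx with rfl | hx
      · calc Multiset.card U₁ ≤ Multiset.card (M.map (s+·)) := Multiset.card_le_card h₁
          _ = Multiset.card M := Multiset.card_map _ _
      · exact hbd x hx
    · have hrow : (Multiset.card U₁ : ℚ) * s +
          ((M.sort (· ≤ ·)).take (Multiset.card U₁)).sum ≤ U₁.sum := by
        have hV : U₁.map (fun x => x - s) ≤ M := map_sub_le M U₁ s h₁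
        have := sorted_take_sum_le M (U₁.map (fun x => x - s)) hV
        rw [Multiset.card_map, sum_map_sub] at this
        linarith
      simp only [dot_cons, List.map_cons, List.sum_cons, Multiset.sum_add]
      linarith

/-- build a sub-multiset of the product realizing given row counts -/
lemma build (M : Multiset ℚ) : ∀ (c : List ℕ) (l : List ℚ), c.length = l.length →
    (∀ x ∈ c, x ≤ Multiset.card M) →
    ∃ W : Multiset ℚ, W ≤ (l.map fun s => M.map (fun t => s + t)).sum ∧
      Multiset.card W = c.sum ∧
      W.sum = dot c l + (c.map fun n => ((M.sort (· ≤ ·)).take n).sum).sum := by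
  intro c
  induction c with
  | nil => intro l hlen _; exact ⟨0, by simp, by simp, by simp⟩
  | cons c₀ cs ih =>
    intro l hlen hbd
    cases l with
    | nil => simp at hlen
    | cons s lt =>
      obtain ⟨W', hW'le, hW'card, hW'sum⟩ :=
        ih lt (by simpa using hlen) (fun x hx => hbd x (List.mem_cons_of_mem _ hx))
      have hc₀ : c₀ ≤ (M.sort (· ≤ ·)).length := by
        rw [Multiset.length_sort]; exact hbd c₀ (List.mem_cons_self)
      refine ⟨↑(((M.sort (· ≤ ·)).take c₀).map (fun t => s + t)) + W', ?_, ?_, ?_⟩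
      · rw [List.map_cons, List.sum_cons]
        apply add_le_add _ hW'le
        have h1 : (((M.sort (· ≤ ·)).take c₀) : Multiset ℚ) ≤ ↑(M.sort (· ≤ ·)) :=
          Multiset.coe_le.mpr (List.take_sublist _ _).subperm
        rw [Multiset.sort_eq] at h1
        calc (↑(((M.sort (· ≤ ·)).take c₀).map (fun t => s + t)) : Multiset ℚ)
            = (((M.sort (· ≤ ·)).take c₀ : Multiset ℚ)).map (fun t => s + t) := by
              rw [Multiset.map_coe]
          _ ≤ M.map (fun t => s + t) := Multiset.map_le_map h1
      · simp [hW'card, min_eq_left hc₀]; simpa using hc₀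
      · rw [Multiset.sum_add, Multiset.sum_coe, list_sum_map_add_left]
        rw [List.length_take, min_eq_left hc₀]
        simp only [dot_cons, List.map_cons, List.sum_cons, hW'sum]
        ring

lemma exists_max (c : List ℕ) (hc : c ≠ []) : ∃ a ∈ c, ∀ b ∈ c, b ≤ a := by
  induction c with
  | nil => simp at hc
  | cons a t ih =>
    rcases eq_or_ne t [] with rfl | ht
    · exact ⟨a, by simp, by simp⟩
    · obtain ⟨b, hb, hmax⟩ := ih ht
      rcases le_total a b with h | h
      · exact ⟨b, List.mem_cons_of_mem _ hb, by
          intro x hx; rcases List.mem_cons.mp hx with rfl | hx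
          · exact h
          · exact hmax x hx⟩
      · exact ⟨a, List.mem_cons_self, by
          intro x hx; rcases List.mem_cons.mp hx with rfl | hx
          · exact le_refl _
          · exact (hmax x hx).trans h⟩

lemma move_front : ∀ (u : List ℕ) (c₀ : ℕ) (v : List ℕ) (l : List ℚ), l.Pairwise (· ≤ ·) →
    (u ++ c₀ :: v).length = l.length → (∀ x ∈ u, x ≤ c₀) →
    dot (c₀ :: (u ++ v)) l ≤ dot (u ++ c₀ :: v) l := by
  intro u
  induction u with
  | nil => intro c₀ v l _ _ _; simp
  | cons a u ih =>
    intro c₀ v l hsort hlen hbd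
    match l with
    | [] => simp at hlen
    | [x] =>
      exfalso
      simp only [List.length_append, List.length_cons, List.length_singleton,
        List.length_nil] at hlen
      omega
    | x :: y :: lt =>
      have hxy : x ≤ y := (List.pairwise_cons.mp hsort).1 y (by simp)
      have hsort' : (y :: lt).Pairwise (· ≤ ·) := (List.pairwise_cons.mp hsort).2
      have hlen' : (u ++ c₀ :: v).length = (y :: lt).length := by
        simp at hlen ⊢; omega
      have hbd' : ∀ x ∈ u, x ≤ c₀ := fun z hz => hbd z (List.mem_cons_of_mem _ hz)
      have IH := ih c₀ v (y :: lt) hsort' hlen' hbd'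
      have ha : (a : ℚ) ≤ (c₀ : ℚ) := by
        exact_mod_cast hbd a (List.mem_cons_self)
      have hL : dot (c₀ :: ((a :: u) ++ v)) (x :: y :: lt)
          = (c₀ : ℚ) * x + ((a : ℚ) * y + dot (u ++ v) lt) := by simp
      have hR : dot ((a :: u) ++ c₀ :: v) (x :: y :: lt)
          = (a : ℚ) * x + dot (u ++ c₀ :: v) (y :: lt) := by simp
      have hM : dot (c₀ :: (u ++ v)) (y :: lt) = (c₀ : ℚ) * y + dot (u ++ v) lt := by simp
      rw [hL, hR]
      rw [hM] at IH
      nlinarith [mul_le_mul_of_nonneg_left hxy (show (0:ℚ) ≤ c₀ - a by linarith)]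

/-- rearrangement: sorting the coefficients decreasingly against an increasing list
only decreases the dot product. -/
lemma rearrange : ∀ (n : ℕ) (c : List ℕ) (l : List ℚ), c.length = n → l.Pairwise (· ≤ ·) →
    c.length = l.length →
    ∃ c' : List ℕ, c'.Perm c ∧ c'.Pairwise (· ≥ ·) ∧ dot c' l ≤ dot c l := by
  intro n
  induction n with
  | zero =>
    intro c l hc _ _
    rw [List.length_eq_zero_iff] at hc
    exact ⟨[], by simp [hc], by simp, by simp [hc]⟩
  | succ n ih =>
    intro c l hc hsort hlen
    have hcne : c ≠ [] := by intro h; rw [h] at hc; simp at hc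
    obtain ⟨c₀, hc₀mem, hc₀max⟩ := exists_max c hcne
    obtain ⟨u, v, rfl⟩ := List.append_of_mem hc₀mem
    match l with
    | [] => exfalso; rw [hlen] at hc; simp at hc
    | x :: lt =>
      have hmf := move_front u c₀ v (x :: lt) hsort hlen (fun z hz => hc₀max z (by simp [hz]))
      have hlen2 : (u ++ v).length = lt.length := by simp at hlen ⊢; omega
      have hn : (u ++ v).length = n := by simp at hc ⊢; omega
      obtain ⟨c'', hperm, hsorted, hdot⟩ := ih (u ++ v) lt hn (List.pairwise_cons.mp hsort).2 hlen2
      refine ⟨c₀ :: c'', ?_, ?_, ?_⟩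
      · exact ((hperm.cons c₀).trans List.perm_middle.symm)
      · rw [List.pairwise_cons]
        exact ⟨fun b hb => hc₀max b (List.perm_middle.symm.mem_iff.mp
          (List.mem_cons_of_mem _ (hperm.mem_iff.mp hb))), hsorted⟩
      · calc dot (c₀ :: c'') (x :: lt) = (c₀ : ℚ) * x + dot c'' lt := by simp
          _ ≤ (c₀ : ℚ) * x + dot (u ++ v) lt := by linarith
          _ = dot (c₀ :: (u ++ v)) (x :: lt) := by simp
          _ ≤ dot (u ++ c₀ :: v) (x :: lt) := hmf

/-- Abel-summation comparison: for an antitone coefficient list, prefix-sum domination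
gives domination of dot products (with a slack `δ`). -/
lemma abel : ∀ (a : List ℕ) (l l' : List ℚ) (δ : ℚ) (cb : ℕ),
    a.Pairwise (· ≥ ·) → (∀ x ∈ a, x ≤ cb) → a.length = l.length → a.length = l'.length → 0 ≤ δ →
    (∀ i : ℕ, (l.take i).sum ≤ δ + (l'.take i).sum) →
    dot a l ≤ (cb : ℚ) * δ + dot a l' := by
  intro a
  induction a with
  | nil =>
    intro l l' δ cb _ _ _ _ hδ _
    simp; positivity
  | cons a₀ ar ih =>
    intro l l' δ cb hsort hbd hlen hlen' hδ hdom
    match l, l' with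
    | x :: lr, x' :: lr' =>
      have hx : x ≤ δ + x' := by have := hdom 1; simpa using this
      have hδ' : (0:ℚ) ≤ δ + x' - x := by linarith
      have hdom' : ∀ i : ℕ, (lr.take i).sum ≤ (δ + x' - x) + (lr'.take i).sum := by
        intro i
        have := hdom (i + 1)
        simp only [List.take_succ_cons, List.sum_cons] at this
        linarith
      have IH := ih lr lr' (δ + x' - x) a₀ (List.pairwise_cons.mp hsort).2
        (fun z hz => (List.pairwise_cons.mp hsort).1 z hz)
        (by simpa using hlen) (by simpa using hlen') hδ' hdom'
      have ha₀ : (a₀ : ℚ) ≤ (cb : ℚ) := by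
        exact_mod_cast hbd a₀ (List.mem_cons_self)
      simp only [dot_cons]
      nlinarith

lemma card_otimes (S T : Multiset ℚ) :
    Multiset.card (otimes S T) = Multiset.card S * Multiset.card T := by
  simp [otimes, Multiset.card_bind, Function.comp]

end NewtonAux

open NewtonAux

theorem newton_otimes_right_mono (S S' T : Multiset ℚ) (h : npLE S S') :
    npLE (otimes S T) (otimes S' T) := by
  obtain ⟨hcard, hpref⟩ := h
  constructor
  · rw [card_otimes, card_otimes, hcard]
  intro i
  set X := otimes S T with hX
  set X' := otimes S' T with hX'
  set L := S.sort (· ≤ ·) with hL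
  set L' := S'.sort (· ≤ ·) with hL'
  -- the i smallest elements of X'
  set U : Multiset ℚ := ↑((X'.sort (· ≤ ·)).take i) with hU
  have hUle : U ≤ X' := by
    have : (↑((X'.sort (· ≤ ·)).take i) : Multiset ℚ) ≤ ↑(X'.sort (· ≤ ·)) :=
      Multiset.coe_le.mpr (List.take_sublist _ _).subperm
    rwa [Multiset.sort_eq] at this
  have hUsum : U.sum = ((X'.sort (· ≤ ·)).take i).sum := Multiset.sum_coe _
  have hUcard : Multiset.card U = min i (Multiset.card X') := by
    rw [hU, Multiset.coe_card, List.length_take, Multiset.length_sort]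
  -- decompose U into row counts
  have hX'eq : X' = (L'.map fun s => T.map (fun t => s + t)).sum := otimes_eq S' T
  obtain ⟨c, hclen, hcbd, hcsum, hcle⟩ := decompose T L' U (hX'eq ▸ hUle)
  -- rearrange to antitone
  obtain ⟨c', hperm, hsorted, hdot⟩ :=
    rearrange c.length c L' rfl (Multiset.pairwise_sort _ _) hclen
  have hLlen : L.length = L'.length := by
    rw [hL, hL', Multiset.length_sort, Multiset.length_sort, hcard]
  have hc'len : c'.length = c.length := hperm.length_eq
  -- Abel comparison
  have habel : dot c' L ≤ dot c' L' := by
    have := abel c' L L' 0 (Multiset.card T) hsorted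
      (fun x hx => hcbd x (hperm.mem_iff.mp hx))
      (by rw [hc'len, hclen, hLlen]) (by rw [hc'len, hclen]) le_rfl
      (fun j => by simpa using hpref j)
    simpa using this
  -- build a sub-multiset of X with counts c'
  obtain ⟨W, hWle, hWcard, hWsum⟩ := build T c' L (by rw [hc'len, hclen, hLlen])
    (fun x hx => hcbd x (hperm.mem_iff.mp hx))
  have hWleX : W ≤ X := by rw [hX, otimes_eq S T]; exact hWle
  have hTsum : (c'.map fun n => ((T.sort (· ≤ ·)).take n).sum).sum
      = (c.map fun n => ((T.sort (· ≤ ·)).take n).sum).sum :=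
    (hperm.map _).sum_eq
  have hWcardU : Multiset.card W = Multiset.card U := by
    rw [hWcard, hperm.sum_eq, hcsum]
  have hmain : ((X.sort (· ≤ ·)).take (Multiset.card W)).sum ≤ ((X'.sort (· ≤ ·)).take i).sum := by
    calc ((X.sort (· ≤ ·)).take (Multiset.card W)).sum ≤ W.sum :=
          sorted_take_sum_le X W hWleX
      _ = dot c' L + (c'.map fun n => ((T.sort (· ≤ ·)).take n).sum).sum := hWsum
      _ ≤ dot c' L' + (c.map fun n => ((T.sort (· ≤ ·)).take n).sum).sum := by
          rw [hTsum] at *; linarith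
      _ ≤ dot c L' + (c.map fun n => ((T.sort (· ≤ ·)).take n).sum).sum := by linarith
      _ ≤ U.sum := hcle
      _ = ((X'.sort (· ≤ ·)).take i).sum := hUsum
  have htake : (X.sort (· ≤ ·)).take i = (X.sort (· ≤ ·)).take (Multiset.card W) := by
    rw [List.take_eq_take_iff]
    rw [hWcardU, hUcard, Multiset.length_sort, card_otimes, card_otimes, hcard]
    omega
  rw [htake]
  exact hmain
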